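/- Fix k ≥ 1, μ > 0, σ > 0, p_1, …, p_k > 0, and T > 0. Let α : [0, T] → ℝ^k be a differentiable function with α(0) = 0 satisfying, for all t ∈ [0, T] and all i, α_i′(t) = r_i(t)/R(t), where r_i(t) = μ p_i − (μ² p_i + σ²) α_i(t) and R(t) = sqrt(Σ_{j=1}^k r_j(t)²) > 0. Then for all t ∈ [0, T] and all i: 0 ≤ r_i(t) ≤ μ p_i, 0 ≤ α_i′(t) ≤ 1, and 0 ≤ α_i(t) ≤ min(t, μ p_i/(μ² p_i + σ²)). -/

import Mathlib

/-- A priori bounds on the normalized gradient flow (NGF) trajectory: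
if `α : [0, T] → ℝ^k` is differentiable with `α(0) = 0` and solves
`α_i′(t) = r_i(t)/R(t)` where `r_i(t) = μ p_i − (μ² p_i + σ²) α_i(t)` and
`R(t) = sqrt(Σ_j r_j(t)²) > 0`, then for all `t ∈ [0, T]` and all `i`:
`0 ≤ r_i(t) ≤ μ p_i`, `0 ≤ α_i′(t) ≤ 1`, and `0 ≤ α_i(t) ≤ min(t, μ p_i/(μ² p_i + σ²))`. -/
theorem stmt13 (k : ℕ) (hk : 1 ≤ k) (μ σ : ℝ) (hμ : 0 < μ) (hσ : 0 < σ)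
    (p : Fin k → ℝ) (hp : ∀ c, 0 < p c)
    (T : ℝ) (hT : 0 < T)
    (α : ℝ → Fin k → ℝ) (hα0 : ∀ i, α 0 i = 0)
    (r : ℝ → Fin k → ℝ)
    (hr : ∀ t i, r t i = μ * p i - (μ ^ 2 * p i + σ ^ 2) * α t i)
    (R : ℝ → ℝ) (hR : ∀ t, R t = Real.sqrt (∑ j, (r t j) ^ 2))
    (hRpos : ∀ t ∈ Set.Icc (0 : ℝ) T, 0 < R t)
    (hode : ∀ t ∈ Set.Icc (0 : ℝ) T, ∀ i,
      HasDerivWithinAt (fun s => α s i) (r t i / R t) (Set.Icc (0 : ℝ) T) t) :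
    ∀ t ∈ Set.Icc (0 : ℝ) T, ∀ i : Fin k,
      0 ≤ r t i ∧ r t i ≤ μ * p i ∧
      0 ≤ r t i / R t ∧ r t i / R t ≤ 1 ∧
      0 ≤ α t i ∧ α t i ≤ min t (μ * p i / (μ ^ 2 * p i + σ ^ 2)) := by
  set I : Set ℝ := Set.Icc (0 : ℝ) T with hI
  have h0I : (0 : ℝ) ∈ I := ⟨le_rfl, hT.le⟩
  have hcpos : ∀ i : Fin k, 0 < μ ^ 2 * p i + σ ^ 2 := by
    intro i; have := hp i; positivity
  -- continuity
  have hαc : ∀ i, ContinuousOn (fun s => α s i) I :=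
    fun i t ht => (hode t ht i).continuousWithinAt
  have hrc : ∀ i, ContinuousOn (fun s => r s i) I := by
    intro i
    have he : (fun s => r s i) = fun s => μ * p i - (μ ^ 2 * p i + σ ^ 2) * α s i :=
      funext fun s => hr s i
    rw [he]
    exact continuousOn_const.sub (continuousOn_const.mul (hαc i))
  have hRc : ContinuousOn R I := by
    have he : R = fun t => Real.sqrt (∑ j, (r t j) ^ 2) := funext hR
    rw [he]
    exact (continuousOn_finset_sum _ fun j _ => (hrc j).pow 2).sqrt
  -- minimum of R on the compact interval
  obtain ⟨t₀, ht₀, hmin⟩ :=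
    isCompact_Icc.exists_isMinOn (Set.nonempty_Icc.2 hT.le) hRc
  have hm : 0 < R t₀ := hRpos t₀ ht₀
  -- derivative of r
  have hr' : ∀ t ∈ I, ∀ i, HasDerivWithinAt (fun s => r s i)
      (-((μ ^ 2 * p i + σ ^ 2) * (r t i / R t))) I t := by
    intro t ht i
    have he : (fun s => r s i) = fun s => μ * p i - (μ ^ 2 * p i + σ ^ 2) * α s i :=
      funext fun s => hr s i
    rw [he]
    simpa using (((hode t ht i).const_mul (μ ^ 2 * p i + σ ^ 2)).const_sub (μ * p i))
  have hintI : interior I = Set.Ioo (0 : ℝ) T := by rw [hI, interior_Icc]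
  have hr0 : ∀ i, r 0 i = μ * p i := by
    intro i; rw [hr, hα0]; ring
  -- key bounds on r
  have key : ∀ i : Fin k, ∀ t ∈ I, 0 < r t i ∧ r t i ≤ μ * p i := by
    intro i
    have hc : 0 < μ ^ 2 * p i + σ ^ 2 := hcpos i
    -- h = r² has derivative -2c r²/R
    have hh' : ∀ t ∈ I, HasDerivWithinAt (fun s => (r s i) ^ 2)
        (2 * r t i * (-((μ ^ 2 * p i + σ ^ 2) * (r t i / R t)))) I t := by
      intro t ht
      have h := (hr' t ht i).fun_pow 2
      exact h.congr_deriv (by norm_num)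
    -- r² is antitone
    have hanti : AntitoneOn (fun s => (r s i) ^ 2) I := by
      refine antitoneOn_of_hasDerivWithinAt_nonpos (convex_Icc _ _) ((hrc i).pow 2)
        (f' := fun t => 2 * r t i * (-((μ ^ 2 * p i + σ ^ 2) * (r t i / R t)))) ?_ ?_
      · intro x hx
        have hxI : x ∈ I := by rw [hintI] at hx; exact Set.Ioo_subset_Icc_self hx
        exact (hh' x hxI).mono interior_subset
      · intro x hx
        have hxI : x ∈ I := by rw [hintI] at hx; exact Set.Ioo_subset_Icc_self hx
        have hRx := hRpos x hxI
        show 2 * r x i * (-((μ ^ 2 * p i + σ ^ 2) * (r x i / R x))) ≤ 0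
        have h1 : 2 * r x i * (-((μ ^ 2 * p i + σ ^ 2) * (r x i / R x)))
            = -(2 * (μ ^ 2 * p i + σ ^ 2) * ((r x i) ^ 2 / R x)) := by ring
        rw [h1, neg_nonpos]
        have := hp i
        positivity
    -- g = r² * exp(M t) is monotone, M = 2c/m
    set M : ℝ := 2 * (μ ^ 2 * p i + σ ^ 2) / R t₀ with hMdef
    have hMpos : 0 < M := by rw [hMdef]; positivity
    have hg : MonotoneOn (fun s => (r s i) ^ 2 * Real.exp (M * s)) I := by
      refine monotoneOn_of_hasDerivWithinAt_nonneg (convex_Icc _ _)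
        (((hrc i).pow 2).mul (Real.continuous_exp.comp (continuous_const.mul continuous_id)).continuousOn)
        (f' := fun t => 2 * r t i * (-((μ ^ 2 * p i + σ ^ 2) * (r t i / R t))) * Real.exp (M * t)
          + (r t i) ^ 2 * (Real.exp (M * t) * M)) ?_ ?_
      · intro x hx
        have hxI : x ∈ I := by rw [hintI] at hx; exact Set.Ioo_subset_Icc_self hx
        have hexp : HasDerivWithinAt (fun s => Real.exp (M * s)) (Real.exp (M * x) * M)
            (interior I) x := by
          have := ((hasDerivAt_id x).const_mul M).exp
          simpa [mul_comm] using this.hasDerivWithinAt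
        exact ((hh' x hxI).mono interior_subset).mul hexp
      · intro x hx
        have hxI : x ∈ I := by rw [hintI] at hx; exact Set.Ioo_subset_Icc_self hx
        have hRx := hRpos x hxI
        have hRxm : R t₀ ≤ R x := hmin hxI
        have hexp : (0 : ℝ) < Real.exp (M * x) := Real.exp_pos _
        show 0 ≤ 2 * r x i * (-((μ ^ 2 * p i + σ ^ 2) * (r x i / R x))) * Real.exp (M * x)
            + (r x i) ^ 2 * (Real.exp (M * x) * M)
        have h1 : 2 * r x i * (-((μ ^ 2 * p i + σ ^ 2) * (r x i / R x))) * Real.exp (M * x)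
            + (r x i) ^ 2 * (Real.exp (M * x) * M)
            = Real.exp (M * x) * ((r x i) ^ 2) * (M - 2 * (μ ^ 2 * p i + σ ^ 2) / R x) := by
          field_simp; ring
        rw [h1]
        have h2 : 2 * (μ ^ 2 * p i + σ ^ 2) / R x ≤ M := by
          rw [hMdef]
          exact div_le_div_of_nonneg_left (by positivity) hm hRxm
        exact mul_nonneg (mul_nonneg (Real.exp_pos _).le (sq_nonneg _)) (sub_nonneg.2 h2)
    -- r² stays positive
    have hpos : ∀ t ∈ I, 0 < (r t i) ^ 2 := by
      intro t ht
      have hge := hg h0I ht ht.1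
      dsimp only at hge
      have h00 : (r 0 i) ^ 2 * Real.exp (M * 0) = (μ * p i) ^ 2 := by
        rw [hr0 i]; simp
      rw [h00] at hge
      have hpp : (0 : ℝ) < (μ * p i) ^ 2 := by have := hp i; positivity
      have hexp : (0 : ℝ) < Real.exp (M * t) := Real.exp_pos _
      nlinarith
    have hne : ∀ t ∈ I, r t i ≠ 0 := by
      intro t ht h0
      have := hpos t ht
      rw [h0] at this; simp at this
    -- sign via IVT
    have hsign : ∀ t ∈ I, 0 < r t i := by
      intro t ht
      by_contra hle
      push_neg at hle
      have hlt : r t i < 0 := lt_of_le_of_ne hle (hne t ht)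
      have hsub : Set.Icc (0 : ℝ) t ⊆ I := Set.Icc_subset_Icc le_rfl ht.2
      have hIVT := intermediate_value_Icc' ht.1 ((hrc i).mono hsub)
      have h0mem : (0 : ℝ) ∈ Set.Icc (r t i) (r 0 i) := by
        constructor
        · exact hlt.le
        · rw [hr0 i]; have := hp i; positivity
      obtain ⟨s, hs, hs0⟩ := hIVT h0mem
      exact hne s (hsub hs) hs0
    intro t ht
    refine ⟨hsign t ht, ?_⟩
    have h2 := hanti h0I ht ht.1
    dsimp only at h2
    have h00 : (r 0 i) ^ 2 = (μ * p i) ^ 2 := by rw [hr0 i]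
    rw [h00] at h2
    nlinarith [hsign t ht, hp i, mul_pos hμ (hp i)]
  -- bound r/R ≤ 1 for all points (needed both pointwise and for the MVT)
  have hdiv : ∀ t ∈ I, ∀ i : Fin k, 0 ≤ r t i / R t ∧ r t i / R t ≤ 1 := by
    intro t ht i
    have hRt := hRpos t ht
    obtain ⟨hrpos, _⟩ := key i t ht
    have hle : r t i ≤ R t := by
      rw [hR]
      have hsum : (r t i) ^ 2 ≤ ∑ j, (r t j) ^ 2 :=
        Finset.single_le_sum (f := fun j => (r t j) ^ 2) (fun j _ => sq_nonneg _)
          (Finset.mem_univ i)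
      calc r t i ≤ |r t i| := le_abs_self _
        _ = Real.sqrt ((r t i) ^ 2) := (Real.sqrt_sq_eq_abs _).symm
        _ ≤ Real.sqrt (∑ j, (r t j) ^ 2) := Real.sqrt_le_sqrt hsum
    exact ⟨div_nonneg hrpos.le hRt.le, (div_le_one hRt).2 hle⟩
  -- conclusion
  intro t ht i
  obtain ⟨hrpos, hrle⟩ := key i t ht
  obtain ⟨hd0, hd1⟩ := hdiv t ht i
  have hc := hcpos i
  have hca : (μ ^ 2 * p i + σ ^ 2) * α t i = μ * p i - r t i := by
    have := hr t i; linarith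
  have hα_nonneg : 0 ≤ α t i := by nlinarith
  have hα_le_eq : α t i ≤ μ * p i / (μ ^ 2 * p i + σ ^ 2) := by
    rw [le_div_iff₀ hc]
    nlinarith
  have hα_le_t : α t i ≤ t := by
    have hmvt := Convex.norm_image_sub_le_of_norm_hasDerivWithin_le
      (f := fun s => α s i) (f' := fun s => r s i / R s) (C := 1)
      (fun x hx => hode x hx i)
      (fun x hx => by
        obtain ⟨h1, h2⟩ := hdiv x hx i
        rw [Real.norm_eq_abs, abs_of_nonneg h1]; exact h2)
      (convex_Icc _ _) h0I ht
    rw [hα0 i, sub_zero, sub_zero, one_mul, Real.norm_eq_abs, Real.norm_eq_abs,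
      abs_of_nonneg ht.1] at hmvt
    exact (le_abs_self _).trans hmvt
  exact ⟨hrpos.le, hrle, hd0, hd1, hα_nonneg, le_min hα_le_t hα_le_eq⟩
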